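/- For probability measures μ and ν on ℝ with finite first moments, the 1-Wasserstein distance equals the L¹ distance between their cumulative distribution functions: W₁(μ, ν) = ∫_ℝ |F_μ(t) − F_ν(t)| dt. -/

import Mathlib

open MeasureTheory ProbabilityTheory Set
open scoped ENNReal

/-- Quantile function (junk value 0 outside (0,1)). -/
noncomputable def myQ (μ : Measure ℝ) (u : ℝ) : ℝ :=
  if u ∈ Set.Ioo (0:ℝ) 1 then sInf {x | u ≤ cdf μ x} else 0

variable (μ : Measure ℝ) [IsProbabilityMeasure μ]

lemma myQ_set_nonempty {u : ℝ} (hu : u ∈ Set.Ioo (0:ℝ) 1) :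
    {x | u ≤ cdf μ x}.Nonempty := by
  have h := tendsto_cdf_atTop μ
  have : ∀ᶠ x in Filter.atTop, u < cdf μ x := h.eventually_const_lt hu.2
  obtain ⟨x, hx⟩ := this.exists
  exact ⟨x, hx.le⟩

lemma myQ_set_bddBelow {u : ℝ} (hu : u ∈ Set.Ioo (0:ℝ) 1) :
    BddBelow {x | u ≤ cdf μ x} := by
  have h := tendsto_cdf_atBot μ
  have : ∀ᶠ x in Filter.atBot, cdf μ x < u := h.eventually_lt_const hu.1
  obtain ⟨c, hc⟩ := this.exists
  refine ⟨c, fun x hx => ?_⟩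
  by_contra hcx
  exact absurd (le_trans hx (monotone_cdf μ (le_of_not_ge hcx))) (not_le.2 hc)

lemma myQ_le_iff {u : ℝ} (hu : u ∈ Set.Ioo (0:ℝ) 1) (t : ℝ) :
    myQ μ u ≤ t ↔ u ≤ cdf μ t := by
  rw [myQ, if_pos hu]
  constructor
  · intro h
    -- sInf of the set belongs to the set by right-continuity
    have hne := myQ_set_nonempty μ hu
    have hbdd := myQ_set_bddBelow μ hu
    obtain ⟨v, -, hv_tendsto, hv_mem⟩ := exists_seq_tendsto_sInf hne hbdd
    have hmem : u ≤ cdf μ (sInf {x | u ≤ cdf μ x}) := by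
      have hwithin : Filter.Tendsto v Filter.atTop
          (nhdsWithin (sInf {x | u ≤ cdf μ x}) (Ici (sInf {x | u ≤ cdf μ x}))) := by
        rw [tendsto_nhdsWithin_iff]
        exact ⟨hv_tendsto, Filter.Eventually.of_forall fun n => csInf_le hbdd (hv_mem n)⟩
      have := ((cdf μ).right_continuous _).tendsto.comp hwithin
      exact ge_of_tendsto this (Filter.Eventually.of_forall fun n => hv_mem n)
    exact hmem.trans (monotone_cdf μ h)
  · intro h
    exact csInf_le (myQ_set_bddBelow μ hu) h

lemma measurable_myQ : Measurable (myQ μ) := by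
  refine measurable_of_Iic fun t => ?_
  have : myQ μ ⁻¹' Iic t =
      (Set.Ioo (0:ℝ) 1 ∩ Iic (cdf μ t)) ∪ ((Set.Ioo (0:ℝ) 1)ᶜ ∩ {u | (0:ℝ) ≤ t}) := by
    ext u
    by_cases hu : u ∈ Set.Ioo (0:ℝ) 1
    · simp only [mem_preimage, mem_Iic, myQ_le_iff μ hu, mem_union, mem_inter_iff, hu,
        mem_compl_iff, not_true_eq_false, false_and, or_false, true_and]
    · simp only [mem_preimage, mem_Iic, myQ, if_neg hu, mem_union, mem_inter_iff, hu,
        mem_compl_iff, not_false_eq_true, true_and, false_and, false_or, mem_setOf_eq, if_false]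
  rw [this]
  by_cases h0 : (0:ℝ) ≤ t
  · have : {u : ℝ | (0:ℝ) ≤ t} = univ := eq_univ_of_forall fun _ => h0
    rw [this]
    exact (measurableSet_Ioo.inter measurableSet_Iic).union
      (measurableSet_Ioo.compl.inter MeasurableSet.univ)
  · have : {u : ℝ | (0:ℝ) ≤ t} = ∅ := eq_empty_of_forall_notMem fun _ => h0
    rw [this]
    exact (measurableSet_Ioo.inter measurableSet_Iic).union
      (measurableSet_Ioo.compl.inter MeasurableSet.empty)

lemma map_myQ : (volume.restrict (Set.Ioo (0:ℝ) 1)).map (myQ μ) = μ := by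
  have hprob : IsProbabilityMeasure ((volume.restrict (Set.Ioo (0:ℝ) 1)).map (myQ μ)) := by
    constructor
    rw [Measure.map_apply (measurable_myQ μ) MeasurableSet.univ]
    simp [Real.volume_Ioo]
  refine Measure.ext_of_Iic _ _ fun t => ?_
  rw [Measure.map_apply (measurable_myQ μ) measurableSet_Iic,
    Measure.restrict_apply' measurableSet_Ioo]
  have hset : myQ μ ⁻¹' Iic t ∩ Set.Ioo (0:ℝ) 1 = Iic (cdf μ t) ∩ Set.Ioo (0:ℝ) 1 := by
    ext u
    simp only [mem_inter_iff, mem_preimage, mem_Iic, and_congr_left_iff]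
    intro hu
    exact myQ_le_iff μ hu t
  rw [hset]
  -- volume of Iic c ∩ Ioo 0 1 = ofReal c, where c = cdf μ t ∈ [0,1]
  have h0 : 0 ≤ cdf μ t := cdf_nonneg μ t
  have h1 : cdf μ t ≤ 1 := cdf_le_one μ t
  rcases lt_or_eq_of_le h1 with hlt | heq1
  · have : Iic (cdf μ t) ∩ Set.Ioo (0:ℝ) 1 = Ioc 0 (cdf μ t) := by
      ext u
      simp only [mem_inter_iff, mem_Iic, mem_Ioo, mem_Ioc]
      exact ⟨fun ⟨h1, h2, _⟩ => ⟨h2, h1⟩, fun ⟨h1, h2⟩ => ⟨h2, h1, lt_of_le_of_lt h2 hlt⟩⟩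
    rw [this, Real.volume_Ioc, ← ofReal_cdf μ t]
    simp
  · have : Iic (cdf μ t) ∩ Set.Ioo (0:ℝ) 1 = Set.Ioo (0:ℝ) 1 := by
      refine inter_eq_self_of_subset_right fun u hu => ?_
      rw [mem_Iic, heq1]
      exact hu.2.le
    rw [this, Real.volume_Ioo, ← ofReal_cdf μ t, heq1]
    simp

section LayerCake

/-- The "between" set used for the layer-cake representation of `|x - y|`. -/
def btwSet : Set ((ℝ × ℝ) × ℝ) :=
  {q | (q.1.1 ≤ q.2 ∧ q.2 < q.1.2) ∨ (q.1.2 ≤ q.2 ∧ q.2 < q.1.1)}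

lemma measurableSet_btwSet : MeasurableSet btwSet := by
  have h1 : MeasurableSet {q : (ℝ × ℝ) × ℝ | q.1.1 ≤ q.2 ∧ q.2 < q.1.2} :=
    (measurableSet_le (measurable_fst.fst) measurable_snd).inter
      (measurableSet_lt measurable_snd (measurable_fst.snd))
  have h2 : MeasurableSet {q : (ℝ × ℝ) × ℝ | q.1.2 ≤ q.2 ∧ q.2 < q.1.1} :=
    (measurableSet_le (measurable_fst.snd) measurable_snd).inter
      (measurableSet_lt measurable_snd (measurable_fst.fst))
  exact h1.union h2

lemma Sbtw_slice (p : ℝ × ℝ) (t : ℝ) :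
    (p, t) ∈ btwSet ↔ t ∈ Set.Ico (min p.1 p.2) (max p.1 p.2) := by
  simp only [btwSet, mem_setOf_eq, mem_Ico]
  constructor
  · rintro (⟨h1, h2⟩ | ⟨h1, h2⟩)
    · exact ⟨le_trans (min_le_left _ _) h1, h2.trans_le (le_max_right _ _)⟩
    · exact ⟨le_trans (min_le_right _ _) h1, h2.trans_le (le_max_left _ _)⟩
  · rintro ⟨h1, h2⟩
    rcases le_total p.1 p.2 with h | h
    · exact Or.inl ⟨(min_eq_left h) ▸ h1, (max_eq_right h) ▸ h2⟩
    · exact Or.inr ⟨(min_eq_right h) ▸ h1, (max_eq_left h) ▸ h2⟩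

lemma lintegral_slice (p : ℝ × ℝ) :
    ∫⁻ t, btwSet.indicator (fun _ => (1:ℝ≥0∞)) (p, t) = ENNReal.ofReal |p.1 - p.2| := by
  have : (fun t => btwSet.indicator (fun _ => (1:ℝ≥0∞)) (p, t)) =
      (Set.Ico (min p.1 p.2) (max p.1 p.2)).indicator (fun _ => (1:ℝ≥0∞)) := by
    ext t
    by_cases ht : (p, t) ∈ btwSet
    · rw [indicator_of_mem ht, indicator_of_mem ((Sbtw_slice p t).1 ht)]
    · rw [indicator_of_notMem ht, indicator_of_notMem (fun h => ht ((Sbtw_slice p t).2 h))]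
  rw [this, lintegral_indicator measurableSet_Ico, setLIntegral_one, Real.volume_Ico,
    max_sub_min_eq_abs, abs_sub_comm]

lemma lintegral_abs_coupling (π : Measure (ℝ × ℝ)) [IsProbabilityMeasure π] :
    ∫⁻ p, ENNReal.ofReal |p.1 - p.2| ∂π
      = ∫⁻ t, (π {p | p.1 ≤ t ∧ t < p.2} + π {p | p.2 ≤ t ∧ t < p.1}) := by
  have hmeas : Measurable (fun q : (ℝ × ℝ) × ℝ => btwSet.indicator (fun _ => (1:ℝ≥0∞)) q) :=
    measurable_const.indicator measurableSet_btwSet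
  have hswap : ∫⁻ p, ∫⁻ t, btwSet.indicator (fun _ => (1:ℝ≥0∞)) (p, t) ∂volume ∂π
      = ∫⁻ t, ∫⁻ p, btwSet.indicator (fun _ => (1:ℝ≥0∞)) (p, t) ∂π ∂volume :=
    lintegral_lintegral_swap (hmeas.comp measurable_id).aemeasurable
  calc ∫⁻ p, ENNReal.ofReal |p.1 - p.2| ∂π
      = ∫⁻ p, ∫⁻ t, btwSet.indicator (fun _ => (1:ℝ≥0∞)) (p, t) ∂volume ∂π := by
        refine lintegral_congr fun p => (lintegral_slice p).symm
    _ = ∫⁻ t, ∫⁻ p, btwSet.indicator (fun _ => (1:ℝ≥0∞)) (p, t) ∂π ∂volume := hswap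
    _ = ∫⁻ t, (π {p | p.1 ≤ t ∧ t < p.2} + π {p | p.2 ≤ t ∧ t < p.1}) := by
        refine lintegral_congr fun t => ?_
        have hmt : Measurable (fun p : ℝ × ℝ => btwSet.indicator (fun _ => (1:ℝ≥0∞)) (p, t)) :=
          hmeas.comp (measurable_id.prodMk measurable_const)
        have hset : (fun p : ℝ × ℝ => (p, t)) ⁻¹' btwSet
            = {p : ℝ × ℝ | p.1 ≤ t ∧ t < p.2} ∪ {p : ℝ × ℝ | p.2 ≤ t ∧ t < p.1} := by
          ext p; simp only [mem_preimage, btwSet, mem_setOf_eq, mem_union]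
        have h1 : MeasurableSet {p : ℝ × ℝ | p.1 ≤ t ∧ t < p.2} :=
          (measurableSet_le measurable_fst measurable_const).inter
            (measurableSet_lt measurable_const measurable_snd)
        have h2 : MeasurableSet {p : ℝ × ℝ | p.2 ≤ t ∧ t < p.1} :=
          (measurableSet_le measurable_snd measurable_const).inter
            (measurableSet_lt measurable_const measurable_fst)
        have hdisj : Disjoint {p : ℝ × ℝ | p.1 ≤ t ∧ t < p.2} {p : ℝ × ℝ | p.2 ≤ t ∧ t < p.1} := by
          rw [Set.disjoint_left]
          rintro p ⟨h1', h2'⟩ ⟨h3', h4'⟩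
          exact absurd (h1'.trans_lt h4') (lt_irrefl _)
        calc ∫⁻ p, btwSet.indicator (fun _ => (1:ℝ≥0∞)) (p, t) ∂π
            = ∫⁻ p, ({p : ℝ × ℝ | p.1 ≤ t ∧ t < p.2} ∪ {p : ℝ × ℝ | p.2 ≤ t ∧ t < p.1}).indicator
                (fun _ => (1:ℝ≥0∞)) p ∂π := by
              refine lintegral_congr fun p => ?_
              by_cases hp : (p.1 ≤ t ∧ t < p.2) ∨ (p.2 ≤ t ∧ t < p.1)
              · rw [indicator_of_mem (show (p, t) ∈ btwSet from hp),
                  indicator_of_mem (show p ∈ _ ∪ _ from hp)]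
              · rw [indicator_of_notMem (show (p, t) ∉ btwSet from hp),
                  indicator_of_notMem (show p ∉ _ ∪ _ from hp)]
          _ = π ({p : ℝ × ℝ | p.1 ≤ t ∧ t < p.2} ∪ {p : ℝ × ℝ | p.2 ≤ t ∧ t < p.1}) := by
              rw [lintegral_indicator (h1.union h2), setLIntegral_one]
          _ = π {p | p.1 ≤ t ∧ t < p.2} + π {p | p.2 ≤ t ∧ t < p.1} := by
              rw [measure_union hdisj h2]

end LayerCake

section Coupling

variable {μ ν : Measure ℝ} {π : Measure (ℝ × ℝ)}

lemma isProb_of_fst [IsProbabilityMeasure μ] (h : π.map Prod.fst = μ) :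
    IsProbabilityMeasure π := by
  constructor
  have := congrArg (fun m : Measure ℝ => m univ) h
  simp only [Measure.map_apply measurable_fst MeasurableSet.univ, preimage_univ] at this
  rw [this]; exact measure_univ

lemma marginal_fst (h : π.map Prod.fst = μ) (t : ℝ) :
    π {p : ℝ × ℝ | p.1 ≤ t} = μ (Iic t) := by
  rw [← h, Measure.map_apply measurable_fst measurableSet_Iic]; rfl

lemma marginal_snd (h : π.map Prod.snd = ν) (t : ℝ) :
    π {p : ℝ × ℝ | p.2 ≤ t} = ν (Iic t) := by
  rw [← h, Measure.map_apply measurable_snd measurableSet_Iic]; rfl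

lemma slice_lower_bound [IsProbabilityMeasure μ] [IsProbabilityMeasure ν]
    (h1 : π.map Prod.fst = μ) (h2 : π.map Prod.snd = ν) (t : ℝ) :
    ENNReal.ofReal |cdf μ t - cdf ν t|
      ≤ π {p : ℝ × ℝ | p.1 ≤ t ∧ t < p.2} + π {p : ℝ × ℝ | p.2 ≤ t ∧ t < p.1} := by
  have hπ : IsProbabilityMeasure π := isProb_of_fst h1
  set A : Set (ℝ × ℝ) := {p | p.1 ≤ t} with hA_def
  set B : Set (ℝ × ℝ) := {p | p.2 ≤ t} with hB_def
  have hA : MeasurableSet A := measurableSet_le measurable_fst measurable_const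
  have hB : MeasurableSet B := measurableSet_le measurable_snd measurable_const
  have hABset : {p : ℝ × ℝ | p.1 ≤ t ∧ t < p.2} = A \ B := by
    ext p; simp [hA_def, hB_def, not_le, mem_diff]
  have hBAset : {p : ℝ × ℝ | p.2 ≤ t ∧ t < p.1} = B \ A := by
    ext p; simp [hA_def, hB_def, not_le, mem_diff]
  have hπA : π A = π (A ∩ B) + π (A \ B) := (measure_inter_add_diff A hB).symm
  have hπB : π B = π (A ∩ B) + π (B \ A) := by
    rw [inter_comm]; exact (measure_inter_add_diff B hA).symm
  have ha : cdf μ t = (π A).toReal := by rw [cdf_eq_real, measureReal_def, marginal_fst h1]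
  have hb : cdf ν t = (π B).toReal := by rw [cdf_eq_real, measureReal_def, marginal_snd h2]
  have habs : |cdf μ t - cdf ν t| ≤ (π (A \ B)).toReal + (π (B \ A)).toReal := by
    rw [ha, hb, hπA, hπB, ENNReal.toReal_add (measure_ne_top _ _) (measure_ne_top _ _),
      ENNReal.toReal_add (measure_ne_top _ _) (measure_ne_top _ _)]
    have := abs_sub ((π (A \ B)).toReal) ((π (B \ A)).toReal)
    rw [abs_of_nonneg ENNReal.toReal_nonneg, abs_of_nonneg ENNReal.toReal_nonneg] at this
    calc |(π (A ∩ B)).toReal + (π (A \ B)).toReal - ((π (A ∩ B)).toReal + (π (B \ A)).toReal)|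
        = |(π (A \ B)).toReal - (π (B \ A)).toReal| := by ring_nf
      _ ≤ _ := this
  calc ENNReal.ofReal |cdf μ t - cdf ν t|
      ≤ ENNReal.ofReal ((π (A \ B)).toReal + (π (B \ A)).toReal) := ENNReal.ofReal_le_ofReal habs
    _ ≤ ENNReal.ofReal ((π (A \ B)).toReal) + ENNReal.ofReal ((π (B \ A)).toReal) :=
        ENNReal.ofReal_add_le
    _ = π (A \ B) + π (B \ A) := by
        rw [ENNReal.ofReal_toReal (measure_ne_top _ _), ENNReal.ofReal_toReal (measure_ne_top _ _)]
    _ = π {p : ℝ × ℝ | p.1 ≤ t ∧ t < p.2} + π {p : ℝ × ℝ | p.2 ≤ t ∧ t < p.1} := by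
        rw [hABset, hBAset]

lemma lintegral_abs_coupling_lt_top [IsProbabilityMeasure μ] [IsProbabilityMeasure ν]
    (h1 : π.map Prod.fst = μ) (h2 : π.map Prod.snd = ν)
    (hμ : Integrable (fun x => |x|) μ) (hν : Integrable (fun x => |x|) ν) :
    ∫⁻ p, ENNReal.ofReal |p.1 - p.2| ∂π < ⊤ := by
  have hbound : ∀ p : ℝ × ℝ, ENNReal.ofReal |p.1 - p.2|
      ≤ ENNReal.ofReal |p.1| + ENNReal.ofReal |p.2| := by
    intro p
    refine le_trans (ENNReal.ofReal_le_ofReal (abs_sub p.1 p.2)) ENNReal.ofReal_add_le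
  have hm : Measurable fun x : ℝ => ENNReal.ofReal |x| :=
    ENNReal.measurable_ofReal.comp measurable_abs
  calc ∫⁻ p, ENNReal.ofReal |p.1 - p.2| ∂π
      ≤ ∫⁻ p : ℝ × ℝ, (ENNReal.ofReal |p.1| + ENNReal.ofReal |p.2|) ∂π :=
        lintegral_mono hbound
    _ = ∫⁻ p : ℝ × ℝ, ENNReal.ofReal |p.1| ∂π + ∫⁻ p : ℝ × ℝ, ENNReal.ofReal |p.2| ∂π :=
        lintegral_add_left (hm.comp measurable_fst) _
    _ = ∫⁻ x, ENNReal.ofReal |x| ∂μ + ∫⁻ x, ENNReal.ofReal |x| ∂ν := by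
        rw [← h1, ← h2, lintegral_map hm measurable_fst, lintegral_map hm measurable_snd]
    _ < ⊤ := by
        have h1' := hμ.hasFiniteIntegral
        have h2' := hν.hasFiniteIntegral
        rw [HasFiniteIntegral] at h1' h2'
        have heq : ∀ x : ℝ, ‖|x|‖ₑ = ENNReal.ofReal |x| := by
          intro x
          rw [← ofReal_norm, Real.norm_eq_abs, abs_abs]
        simp only [heq] at h1' h2'
        exact ENNReal.add_lt_top.2 ⟨h1', h2'⟩

lemma ofReal_sub_add_ofReal_sub (a b : ℝ) :
    ENNReal.ofReal (a - b) + ENNReal.ofReal (b - a) = ENNReal.ofReal |a - b| := by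
  rcases le_total a b with h | h
  · rw [ENNReal.ofReal_of_nonpos (by linarith), zero_add, abs_of_nonpos (by linarith), neg_sub]
  · rw [ENNReal.ofReal_of_nonpos (show b - a ≤ 0 by linarith), add_zero,
      abs_of_nonneg (by linarith)]

end Coupling

section QuantileCoupling

variable (μ ν : Measure ℝ) [IsProbabilityMeasure μ] [IsProbabilityMeasure ν]

lemma measurable_pairQ : Measurable (fun u => (myQ μ u, myQ ν u)) :=
  (measurable_myQ μ).prodMk (measurable_myQ ν)

lemma quantile_slice (t : ℝ) :
    (volume.restrict (Set.Ioo (0:ℝ) 1)).map (fun u => (myQ μ u, myQ ν u))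
        {p : ℝ × ℝ | p.1 ≤ t ∧ t < p.2}
      = ENNReal.ofReal (cdf μ t - cdf ν t) := by
  have hset : MeasurableSet {p : ℝ × ℝ | p.1 ≤ t ∧ t < p.2} :=
    (measurableSet_le measurable_fst measurable_const).inter
      (measurableSet_lt measurable_const measurable_snd)
  rw [Measure.map_apply (measurable_pairQ μ ν) hset,
    Measure.restrict_apply' measurableSet_Ioo]
  set a := cdf μ t with ha_def
  set b := cdf ν t with hb_def
  have hb0 : 0 ≤ b := cdf_nonneg ν t
  have ha1 : a ≤ 1 := cdf_le_one μ t
  have hpre : (fun u => (myQ μ u, myQ ν u)) ⁻¹' {p : ℝ × ℝ | p.1 ≤ t ∧ t < p.2}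
      ∩ Set.Ioo (0:ℝ) 1 = Ioc b a ∩ Set.Ioo (0:ℝ) 1 := by
    ext u
    simp only [mem_inter_iff, mem_preimage, mem_setOf_eq, mem_Ioc, and_congr_left_iff]
    intro hu
    rw [myQ_le_iff μ hu t, ← not_le, myQ_le_iff ν hu t, not_le, ← ha_def, ← hb_def, and_comm]
  rw [hpre]
  rcases le_or_gt a b with hab | hab
  · rw [Ioc_eq_empty (not_lt.2 hab), empty_inter, measure_empty,
      ENNReal.ofReal_of_nonpos (by linarith)]
  · rcases lt_or_eq_of_le ha1 with ha1' | ha1'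
    · have : Ioc b a ∩ Set.Ioo (0:ℝ) 1 = Ioc b a := by
        refine inter_eq_self_of_subset_left fun u hu => ?_
        exact ⟨lt_of_le_of_lt hb0 hu.1, lt_of_le_of_lt hu.2 ha1'⟩
      rw [this, Real.volume_Ioc]
    · have : Ioc b a ∩ Set.Ioo (0:ℝ) 1 = Ioo b 1 := by
        ext u
        simp only [mem_inter_iff, mem_Ioc, mem_Ioo]
        constructor
        · rintro ⟨⟨h1, h2⟩, h3, h4⟩
          exact ⟨h1, h4⟩
        · rintro ⟨h1, h2⟩
          exact ⟨⟨h1, by rw [← ha1'] at h2; exact h2.le⟩, lt_of_le_of_lt hb0 h1, h2⟩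
      rw [this, Real.volume_Ioo, ← ha1']

end QuantileCoupling

lemma quantile_slice' (μ ν : Measure ℝ) [IsProbabilityMeasure μ] [IsProbabilityMeasure ν] (t : ℝ) :
    (volume.restrict (Set.Ioo (0:ℝ) 1)).map (fun u => (myQ μ u, myQ ν u))
        {p : ℝ × ℝ | p.2 ≤ t ∧ t < p.1}
      = ENNReal.ofReal (cdf ν t - cdf μ t) := by
  have hset' : MeasurableSet {p : ℝ × ℝ | p.2 ≤ t ∧ t < p.1} :=
    (measurableSet_le measurable_snd measurable_const).inter
      (measurableSet_lt measurable_const measurable_fst)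
  rw [Measure.map_apply (measurable_pairQ μ ν) hset',
    Measure.restrict_apply' measurableSet_Ioo]
  set a := cdf ν t with ha_def
  set b := cdf μ t with hb_def
  have hb0 : 0 ≤ b := cdf_nonneg μ t
  have ha1 : a ≤ 1 := cdf_le_one ν t
  have hpre : (fun u => (myQ μ u, myQ ν u)) ⁻¹' {p : ℝ × ℝ | p.2 ≤ t ∧ t < p.1}
      ∩ Set.Ioo (0:ℝ) 1 = Ioc b a ∩ Set.Ioo (0:ℝ) 1 := by
    ext u
    simp only [mem_inter_iff, mem_preimage, mem_setOf_eq, mem_Ioc, and_congr_left_iff]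
    intro hu
    rw [myQ_le_iff ν hu t, ← not_le, myQ_le_iff μ hu t, not_le, ← ha_def, ← hb_def, and_comm]
  rw [hpre]
  rcases le_or_gt a b with hab | hab
  · rw [Ioc_eq_empty (not_lt.2 hab), empty_inter, measure_empty,
      ENNReal.ofReal_of_nonpos (by linarith)]
  · rcases lt_or_eq_of_le ha1 with ha1' | ha1'
    · have : Ioc b a ∩ Set.Ioo (0:ℝ) 1 = Ioc b a := by
        refine inter_eq_self_of_subset_left fun u hu => ?_
        exact ⟨lt_of_le_of_lt hb0 hu.1, lt_of_le_of_lt hu.2 ha1'⟩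
      rw [this, Real.volume_Ioc]
    · have : Ioc b a ∩ Set.Ioo (0:ℝ) 1 = Ioo b 1 := by
        ext u
        simp only [mem_inter_iff, mem_Ioc, mem_Ioo]
        constructor
        · rintro ⟨⟨h1, h2⟩, h3, h4⟩
          exact ⟨h1, h4⟩
        · rintro ⟨h1, h2⟩
          exact ⟨⟨h1, by rw [← ha1'] at h2; exact h2.le⟩, lt_of_le_of_lt hb0 h1, h2⟩
      rw [this, Real.volume_Ioo, ← ha1']
/-- 1-Wasserstein distance on ℝ, defined via couplings. -/
noncomputable def W1 (μ ν : MeasureTheory.Measure ℝ) : ℝ :=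
  sInf { r : ℝ | ∃ π : MeasureTheory.Measure (ℝ × ℝ),
    π.map Prod.fst = μ ∧ π.map Prod.snd = ν ∧ r = ∫ p, |p.1 - p.2| ∂π }

/-- W₁ equals the L¹ distance between CDFs. -/
theorem w1_eq_integral_abs_cdf_sub (μ ν : MeasureTheory.Measure ℝ)
    [IsProbabilityMeasure μ] [IsProbabilityMeasure ν]
    (hμ : Integrable (fun x => |x|) μ)
    (hν : Integrable (fun x => |x|) ν) :
    W1 μ ν = ∫ t, |cdf μ t - cdf ν t| := by
  set L : ℝ≥0∞ := ∫⁻ t, ENNReal.ofReal |cdf μ t - cdf ν t| with hL_def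
  set π₀ : Measure (ℝ × ℝ) :=
    (volume.restrict (Set.Ioo (0:ℝ) 1)).map (fun u => (myQ μ u, myQ ν u)) with hπ₀_def
  have h₀fst : π₀.map Prod.fst = μ := by
    rw [hπ₀_def, Measure.map_map measurable_fst (measurable_pairQ μ ν)]
    exact map_myQ μ
  have h₀snd : π₀.map Prod.snd = ν := by
    rw [hπ₀_def, Measure.map_map measurable_snd (measurable_pairQ μ ν)]
    exact map_myQ ν
  have hπ₀prob : IsProbabilityMeasure π₀ := isProb_of_fst h₀fst
  have hmeas_cdf : Measurable fun t => |cdf μ t - cdf ν t| :=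
    ((monotone_cdf μ).measurable.sub (monotone_cdf ν).measurable).abs
  -- the value of the quantile coupling
  have hL₀ : ∫⁻ p, ENNReal.ofReal |p.1 - p.2| ∂π₀ = L := by
    rw [lintegral_abs_coupling π₀, hL_def]
    refine lintegral_congr fun t => ?_
    rw [hπ₀_def, quantile_slice μ ν t, quantile_slice' μ ν t, ofReal_sub_add_ofReal_sub]
  have hLfin : L ≠ ⊤ := by
    rw [← hL₀]
    exact (lintegral_abs_coupling_lt_top h₀fst h₀snd hμ hν).ne
  -- Bochner-integral/lintegral conversions
  have habs_meas : Measurable fun p : ℝ × ℝ => |p.1 - p.2| :=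
    (measurable_fst.sub measurable_snd).abs
  have hconv : ∀ (π : Measure (ℝ × ℝ)),
      ∫ p, |p.1 - p.2| ∂π = (∫⁻ p, ENNReal.ofReal |p.1 - p.2| ∂π).toReal := by
    intro π
    rw [integral_eq_lintegral_of_nonneg_ae (Filter.Eventually.of_forall fun p => abs_nonneg _)
      habs_meas.aestronglyMeasurable]
  have hT : ∫ t, |cdf μ t - cdf ν t| = L.toReal := by
    rw [integral_eq_lintegral_of_nonneg_ae (Filter.Eventually.of_forall fun t => abs_nonneg _)
      hmeas_cdf.aestronglyMeasurable]
  -- membership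
  have hmem : (∫ t, |cdf μ t - cdf ν t|) ∈ { r : ℝ | ∃ π : Measure (ℝ × ℝ),
      π.map Prod.fst = μ ∧ π.map Prod.snd = ν ∧ r = ∫ p, |p.1 - p.2| ∂π } := by
    refine ⟨π₀, h₀fst, h₀snd, ?_⟩
    rw [hconv π₀, hL₀, hT]
  -- lower bound
  have hlow : ∀ r ∈ { r : ℝ | ∃ π : Measure (ℝ × ℝ),
      π.map Prod.fst = μ ∧ π.map Prod.snd = ν ∧ r = ∫ p, |p.1 - p.2| ∂π },
      (∫ t, |cdf μ t - cdf ν t|) ≤ r := by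
    rintro r ⟨π, hf, hs, rfl⟩
    have hπ : IsProbabilityMeasure π := isProb_of_fst hf
    have hle : L ≤ ∫⁻ p, ENNReal.ofReal |p.1 - p.2| ∂π := by
      rw [lintegral_abs_coupling π, hL_def]
      exact lintegral_mono fun t => slice_lower_bound hf hs t
    have hfin : (∫⁻ p, ENNReal.ofReal |p.1 - p.2| ∂π) ≠ ⊤ :=
      (lintegral_abs_coupling_lt_top hf hs hμ hν).ne
    rw [hconv π, hT]
    exact ENNReal.toReal_mono hfin hle
  exact le_antisymm (csInf_le ⟨_, hlow⟩ hmem) (le_csInf ⟨_, hmem⟩ hlow)
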